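/- There exists a real number σ₂ such that the entire function f₂(s) has no zero in the left half-plane Re(s) < σ₂; that is, for all complex s with Re(s) < σ₂ one has f₂(s) ≠ 0. -/

import Mathlib

open Complex

noncomputable def chi (s : ℂ) : ℂ := s * (s - 1) * completedRiemannZeta₀ s + 1

noncomputable def A : ℂ := Real.pi / 3 - 1

noncomputable def f1 (s : ℂ) : ℂ :=
  (s - 1) * ((s - 1) * (3 * s - 2) * (A * s - A + 1) * chi (s + 1) * chi (3 * s)
    - (s + 1) * (s - 2) * chi s * chi (3 * s - 1)
    - 2 * (s - 1) * (s - 2) * chi s * chi (3 * s))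

noncomputable def f2 (s : ℂ) : ℂ :=
  (s - 2) * ((A * s + 3) * (s - 1) ^ 2 * chi (s + 2)
    - 2 * (s - 1) * (s - 3) * chi (s + 1)
    - (s + 2) * (s - 3) * chi s)

noncomputable def Z1 (s : ℂ) : ℂ := chi (2 * s) * f1 s - chi (2 * s - 1) * f1 (1 - s)

noncomputable def Z2 (s : ℂ) : ℂ := chi (2 * s) * f2 s - chi (2 * s - 1) * f2 (1 - s)

/-! ### Auxiliary lemmas -/

lemma zeta_near_one {s : ℂ} (hs : (16:ℝ) ≤ s.re) : ‖riemannZeta s - 1‖ ≤ 1/100 := by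
  have h1 : (1:ℝ) < s.re := by linarith
  have hsum : Summable (fun n : ℕ => 1 / ((n:ℂ) + 1) ^ s) := by
    have := (Complex.summable_one_div_nat_cpow (p := s)).mpr h1
    have h2 := (summable_nat_add_iff (f := fun n : ℕ => 1 / ((n:ℂ)) ^ s) 1).mpr this
    simpa using h2
  have hz := zeta_eq_tsum_one_div_nat_add_one_cpow h1
  rw [Summable.tsum_eq_zero_add hsum] at hz
  have hzz : riemannZeta s - 1 = ∑' n : ℕ, 1 / ((n:ℂ) + 2) ^ s := by
    rw [hz]
    have : ∀ n : ℕ, (1:ℂ) / ((↑(n+1):ℂ) + 1) ^ s = 1 / ((n:ℂ) + 2) ^ s := by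
      intro n; push_cast; ring_nf
    rw [tsum_congr this]
    simp only [one_div, Nat.cast_zero, zero_add, Complex.one_cpow]
    ring
  have hterm : ∀ n : ℕ, ‖1 / ((n:ℂ) + 2) ^ s‖ = ((n:ℝ) + 2) ^ (-s.re) := by
    intro n
    have hp : (0:ℝ) < (n:ℝ) + 2 := by positivity
    have : ((n:ℂ) + 2) = (((n:ℝ) + 2 : ℝ) : ℂ) := by push_cast; ring
    rw [this, norm_div, norm_one, Complex.norm_cpow_eq_rpow_re_of_pos hp,
      one_div, ← Real.rpow_neg hp.le]
  have hsum2 : Summable (fun n : ℕ => ((n:ℝ) + 2) ^ (-s.re)) := by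
    have h0 : Summable (fun n : ℕ => ((n:ℝ)) ^ (-s.re)) := by
      rw [Real.summable_nat_rpow]; linarith
    have h2 := (summable_nat_add_iff (f := fun n : ℕ => ((n:ℝ)) ^ (-s.re)) 2).mpr h0
    exact h2.congr (fun n => by push_cast; ring_nf)
  have hb : ‖riemannZeta s - 1‖ ≤ ∑' n : ℕ, ((n:ℝ) + 2) ^ (-s.re) := by
    rw [hzz]
    calc ‖∑' n : ℕ, 1 / ((n:ℂ) + 2) ^ s‖ ≤ ∑' n : ℕ, ‖1 / ((n:ℂ) + 2) ^ s‖ :=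
          norm_tsum_le_tsum_norm (by simpa only [hterm] using hsum2)
      _ = _ := by simp only [hterm]
  have key : ∀ n : ℕ, ((n:ℝ) + 2) ^ (-s.re) ≤ (2:ℝ) ^ (2 - s.re) * (1/((n:ℝ)+1) - 1/((n:ℝ)+2)) := by
    intro n
    have hn1 : (0:ℝ) < (n:ℝ) + 1 := by positivity
    have hn2 : (0:ℝ) < (n:ℝ) + 2 := by positivity
    have h2n : (2:ℝ) ≤ (n:ℝ) + 2 := by
      have : (0:ℝ) ≤ (n:ℝ) := Nat.cast_nonneg n
      linarith
    have e1 : (1/((n:ℝ)+1) - 1/((n:ℝ)+2)) = (((n:ℝ)+1)*((n:ℝ)+2))⁻¹ := by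
      field_simp; ring
    have ha : (0:ℝ) < (2:ℝ)^(s.re-2) := Real.rpow_pos_of_pos (by norm_num) _
    have hr : (2:ℝ) ^ (s.re - 2) ≤ ((n:ℝ) + 2) ^ (s.re - 2) :=
      Real.rpow_le_rpow (by norm_num) h2n (by linarith)
    have hpow : ((n:ℝ) + 2) ^ (s.re) = ((n:ℝ)+2)^(s.re - 2) * (((n:ℝ)+2)*((n:ℝ)+2)) := by
      rw [show ((n:ℝ)+2)*((n:ℝ)+2) = ((n:ℝ)+2)^(2:ℝ) by
        rw [show (2:ℝ) = ((2:ℕ):ℝ) by norm_num, Real.rpow_natCast]; ring]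
      rw [← Real.rpow_add hn2]; ring_nf
    have hlow : (2:ℝ)^(s.re-2) * (((n:ℝ)+1)*((n:ℝ)+2)) ≤ ((n:ℝ) + 2) ^ (s.re) := by
      rw [hpow]
      have hmono : ((n:ℝ)+1)*((n:ℝ)+2) ≤ ((n:ℝ)+2)*((n:ℝ)+2) := by nlinarith
      have := Real.rpow_pos_of_pos hn2 (s.re - 2)
      nlinarith
    have hinv : (((n:ℝ) + 2) ^ (s.re))⁻¹ ≤ ((2:ℝ)^(s.re-2) * (((n:ℝ)+1)*((n:ℝ)+2)))⁻¹ := by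
      apply inv_anti₀ (by positivity) hlow
    rw [Real.rpow_neg hn2.le, e1]
    rw [show (2:ℝ)^(2-s.re) = ((2:ℝ)^(s.re-2))⁻¹ by
      rw [← Real.rpow_neg (by norm_num)]; ring_nf]
    calc (((n:ℝ) + 2) ^ (s.re))⁻¹ ≤ ((2:ℝ)^(s.re-2) * (((n:ℝ)+1)*((n:ℝ)+2)))⁻¹ := hinv
      _ = ((2:ℝ)^(s.re-2))⁻¹ * (((n:ℝ)+1)*((n:ℝ)+2))⁻¹ := by rw [mul_inv]
  have htsum : ∑' n : ℕ, ((n:ℝ) + 2) ^ (-s.re) ≤ (2:ℝ) ^ (2 - s.re) := by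
    apply Summable.tsum_le_of_sum_range_le hsum2
    intro n
    calc ∑ i ∈ Finset.range n, ((i:ℝ) + 2) ^ (-s.re)
        ≤ ∑ i ∈ Finset.range n, (2:ℝ) ^ (2 - s.re) * (1/((i:ℝ)+1) - 1/((i:ℝ)+2)) :=
          Finset.sum_le_sum (fun i _ => key i)
      _ = (2:ℝ) ^ (2 - s.re) * ∑ i ∈ Finset.range n, ((fun k : ℕ => 1/((k:ℝ)+1)) i - (fun k : ℕ => 1/((k:ℝ)+1)) (i+1)) := by
          rw [Finset.mul_sum]; congr 1; ext i; push_cast; ring_nf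
      _ = (2:ℝ) ^ (2 - s.re) * (1 - 1/((n:ℝ)+1)) := by
          rw [Finset.sum_range_sub' (fun k : ℕ => 1/((k:ℝ)+1)) n]; norm_num
      _ ≤ (2:ℝ) ^ (2 - s.re) * 1 := by
          have : (0:ℝ) < (2:ℝ)^(2-s.re) := Real.rpow_pos_of_pos (by norm_num) _
          have h1n : (0:ℝ) ≤ 1/((n:ℝ)+1) := by positivity
          nlinarith
      _ = (2:ℝ) ^ (2 - s.re) := mul_one _
  have hfin : (2:ℝ) ^ (2 - s.re) ≤ 1/100 := by
    calc (2:ℝ) ^ (2 - s.re) ≤ (2:ℝ) ^ (-14:ℝ) :=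
          Real.rpow_le_rpow_of_exponent_le (by norm_num) (by linarith)
      _ = ((2:ℝ) ^ (14:ℕ))⁻¹ := by
          rw [← Real.rpow_natCast 2 14, ← Real.rpow_neg (by norm_num)]; norm_num
      _ ≤ 1/100 := by norm_num
  linarith

lemma zeta_lower {s : ℂ} (hs : (16:ℝ) ≤ s.re) : (99:ℝ)/100 ≤ ‖riemannZeta s‖ := by
  have h := zeta_near_one hs
  have h2 : ‖(1:ℂ)‖ - ‖riemannZeta s‖ ≤ ‖(1:ℂ) - riemannZeta s‖ := norm_sub_norm_le _ _
  rw [norm_sub_rev] at h2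
  simp only [norm_one] at h2
  linarith

lemma zeta_upper {s : ℂ} (hs : (16:ℝ) ≤ s.re) : ‖riemannZeta s‖ ≤ (101:ℝ)/100 := by
  have h := zeta_near_one hs
  have h2 : ‖riemannZeta s‖ - ‖(1:ℂ)‖ ≤ ‖riemannZeta s - 1‖ := norm_sub_norm_le _ _
  simp only [norm_one] at h2
  linarith

lemma real_gamma_half {x : ℝ} (hx : 1 ≤ x) :
    Real.Gamma x * Real.sqrt (x - 1/2) ≤ Real.Gamma (x + 1/2) := by
  have ha : (0:ℝ) < x - 1/2 := by linarith
  have hb : (0:ℝ) < x + 1/2 := by linarith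
  have hx0 : (0:ℝ) < x := by linarith
  have hconv := Real.convexOn_log_Gamma.2 (Set.mem_Ioi.mpr ha) (Set.mem_Ioi.mpr hb)
    (by norm_num : (0:ℝ) ≤ 1/2) (by norm_num : (0:ℝ) ≤ (1:ℝ)/2) (by norm_num)
  have hmid : (1/2:ℝ) • (x - 1/2) + (1/2:ℝ) • (x + 1/2) = x := by
    simp only [smul_eq_mul]; ring
  rw [hmid] at hconv
  simp only [Function.comp_apply, smul_eq_mul] at hconv
  have pa := Real.Gamma_pos_of_pos ha
  have pb := Real.Gamma_pos_of_pos hb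
  have px := Real.Gamma_pos_of_pos hx0
  have hlog : Real.log (Real.Gamma x ^ 2) ≤ Real.log (Real.Gamma (x-1/2) * Real.Gamma (x+1/2)) := by
    rw [Real.log_pow, Real.log_mul pa.ne' pb.ne']
    push_cast; linarith
  have hsq : Real.Gamma x ^ 2 ≤ Real.Gamma (x-1/2) * Real.Gamma (x+1/2) :=
    (Real.log_le_log_iff (by positivity) (by positivity)).mp hlog
  have hrec : Real.Gamma (x + 1/2) = (x - 1/2) * Real.Gamma (x - 1/2) := by
    have := Real.Gamma_add_one (s := x - 1/2) ha.ne'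
    rw [show x - 1/2 + 1 = x + 1/2 by ring] at this
    exact this
  have hsq2 : (Real.Gamma x * Real.sqrt (x - 1/2))^2 ≤ Real.Gamma (x+1/2)^2 := by
    rw [mul_pow, Real.sq_sqrt ha.le]
    nlinarith
  calc Real.Gamma x * Real.sqrt (x - 1/2)
      = Real.sqrt ((Real.Gamma x * Real.sqrt (x - 1/2))^2) := by
        rw [Real.sqrt_sq (by positivity)]
    _ ≤ Real.sqrt (Real.Gamma (x+1/2)^2) := Real.sqrt_le_sqrt hsq2
    _ = Real.Gamma (x+1/2) := Real.sqrt_sq pb.le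

lemma gamma_half_bound {z : ℂ} (hz : 1 ≤ z.re) :
    ‖Complex.Gamma z‖ * Real.sqrt (z.re - 1/2) ≤ ‖Complex.Gamma (z + 1/2)‖ := by
  set x := z.re with hxdef
  have hx0 : (0:ℝ) < x := by linarith
  have hhalf : (0:ℝ) < ((1:ℂ)/2).re := by norm_num
  have hid := Complex.Gamma_mul_Gamma_eq_betaIntegral (s := z) (t := 1/2) (by linarith) hhalf
  set B : ℝ := Real.Gamma x * Real.Gamma (1/2) / Real.Gamma (x + 1/2) with hB
  have hGb : (0:ℝ) < Real.Gamma (x + 1/2) := Real.Gamma_pos_of_pos (by linarith)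
  have hBpos : 0 < B := by
    have := Real.Gamma_pos_of_pos hx0
    have := Real.Gamma_pos_of_pos (show (0:ℝ) < 1/2 by norm_num)
    positivity
  have hidr := Complex.Gamma_mul_Gamma_eq_betaIntegral (s := (x:ℂ)) (t := 1/2)
    (by simpa using hx0) hhalf
  have hcast : ((x:ℂ) + 1/2) = ((x + 1/2 : ℝ) : ℂ) := by push_cast; ring
  have hhalfc : ((1:ℂ)/2) = (((1:ℝ)/2 : ℝ) : ℂ) := by push_cast; ring
  have hβr : Complex.betaIntegral (x:ℂ) (1/2) = (B : ℂ) := by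
    rw [hcast, Complex.Gamma_ofReal, Complex.Gamma_ofReal,
      show Complex.Gamma (1/2) = ((Real.Gamma (1/2) : ℝ) : ℂ) from by rw [hhalfc, Complex.Gamma_ofReal]] at hidr
    have hne : ((Real.Gamma (x+1/2) : ℝ) : ℂ) ≠ 0 := by exact_mod_cast hGb.ne'
    have hBc : (B:ℂ) = ((Real.Gamma x : ℝ) : ℂ) * ((Real.Gamma (1/2) : ℝ):ℂ) / ((Real.Gamma (x+1/2):ℝ):ℂ) := by
      rw [hB]; push_cast; ring
    rw [hBc, hidr, mul_div_cancel_left₀ _ hne]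
  have hae : ∀ t : ℝ, t ∈ Set.Ioo (0:ℝ) 1 →
      ‖(t:ℂ) ^ (z - 1) * (1 - (t:ℂ)) ^ ((1:ℂ)/2 - 1)‖
        = t ^ (x - 1) * (1 - t) ^ (-(1/2) : ℝ) := by
    intro t ht
    obtain ⟨ht0, ht1⟩ := ht
    have h1t : (0:ℝ) < 1 - t := by linarith
    rw [norm_mul,
      Complex.norm_cpow_eq_rpow_re_of_pos ht0,
      show (1 - (t:ℂ)) = (((1 - t : ℝ)) : ℂ) by push_cast; ring,
      Complex.norm_cpow_eq_rpow_re_of_pos h1t]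
    norm_num [hxdef]
  have hne1 : ∀ᵐ t : ℝ ∂MeasureTheory.volume, t ≠ 1 := by
    refine MeasureTheory.ae_iff.mpr ?_
    have hset : {t : ℝ | ¬ t ≠ 1} = {1} := by ext t; simp
    rw [hset]
    exact MeasureTheory.measure_singleton 1
  have hIoc : Set.uIoc (0:ℝ) 1 = Set.Ioc 0 1 := Set.uIoc_of_le (by norm_num)
  have hfx : ∀ t : ℝ, t ∈ Set.Ioo (0:ℝ) 1 →
      ((‖(t:ℂ) ^ (z - 1) * (1 - (t:ℂ)) ^ ((1:ℂ)/2 - 1)‖ : ℝ) : ℂ)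
        = (t:ℂ) ^ ((x:ℂ) - 1) * (1 - (t:ℂ)) ^ ((1:ℂ)/2 - 1) := by
    intro t ht
    obtain ⟨ht0, ht1⟩ := ht
    have h1t : (0:ℝ) < 1 - t := by linarith
    rw [hae t ⟨ht0, ht1⟩]
    have e1 : ((x:ℂ) - 1) = ((x - 1 : ℝ) : ℂ) := by push_cast; ring
    have e2 : ((1:ℂ)/2 - 1) = ((-(1/2) : ℝ) : ℂ) := by push_cast; ring
    have e3 : (1 - (t:ℂ)) = (((1 - t : ℝ)) : ℂ) := by push_cast; ring
    rw [e1, e2, e3, ← Complex.ofReal_cpow ht0.le, ← Complex.ofReal_cpow h1t.le]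
    push_cast; ring
  have hβx : Complex.betaIntegral (x:ℂ) (1/2)
      = ((∫ t in (0:ℝ)..1, ‖(t:ℂ) ^ (z - 1) * (1 - (t:ℂ)) ^ ((1:ℂ)/2 - 1)‖ : ℝ) : ℂ) := by
    rw [Complex.betaIntegral, ← intervalIntegral.integral_ofReal]
    apply intervalIntegral.integral_congr_ae
    filter_upwards [hne1] with t ht1 htmem
    rw [hIoc] at htmem
    have ht0 : 0 < t := htmem.1
    have ht1' : t < 1 := lt_of_le_of_ne htmem.2 ht1
    exact (hfx t ⟨ht0, ht1'⟩).symm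
  have hintnorm : (∫ t in (0:ℝ)..1, ‖(t:ℂ) ^ (z - 1) * (1 - (t:ℂ)) ^ ((1:ℂ)/2 - 1)‖) = B := by
    have := hβr.symm.trans hβx
    exact_mod_cast this.symm
  have hβbound : ‖Complex.betaIntegral z (1/2)‖ ≤ B := by
    rw [Complex.betaIntegral]
    calc ‖∫ t in (0:ℝ)..1, (t:ℂ) ^ (z - 1) * (1 - (t:ℂ)) ^ ((1:ℂ)/2 - 1)‖
        ≤ ∫ t in (0:ℝ)..1, ‖(t:ℂ) ^ (z - 1) * (1 - (t:ℂ)) ^ ((1:ℂ)/2 - 1)‖ :=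
          intervalIntegral.norm_integral_le_integral_norm (by norm_num)
      _ = B := hintnorm
  have hsqpi : ‖Complex.Gamma (1/2 : ℂ)‖ = Real.sqrt Real.pi := by
    rw [Complex.Gamma_one_half_eq,
      Complex.norm_cpow_eq_rpow_re_of_pos Real.pi_pos]
    rw [Real.sqrt_eq_rpow]
    norm_num
  have hnormid : ‖Complex.Gamma z‖ * Real.sqrt Real.pi
      = ‖Complex.Gamma (z + 1/2)‖ * ‖Complex.betaIntegral z (1/2)‖ := by
    rw [← hsqpi, ← norm_mul, ← norm_mul, hid]
  have hBle : B * Real.sqrt (x - 1/2) ≤ Real.sqrt Real.pi := by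
    have h1 := real_gamma_half (x := x) hz
    have hGhalf : Real.Gamma (1/2) = Real.sqrt Real.pi := Real.Gamma_one_half_eq
    rw [hB, hGhalf]
    rw [div_mul_eq_mul_div, div_le_iff₀ hGb]
    have hsp : 0 ≤ Real.sqrt Real.pi := Real.sqrt_nonneg _
    nlinarith [Real.sqrt_nonneg (x - 1/2), Real.Gamma_pos_of_pos hx0]
  have hsx : 0 < Real.sqrt (x - 1/2) := Real.sqrt_pos.mpr (by linarith)
  have hsp : 0 < Real.sqrt Real.pi := Real.sqrt_pos.mpr Real.pi_pos
  have hGz : 0 ≤ ‖Complex.Gamma (z + 1/2)‖ := norm_nonneg _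
  nlinarith [norm_nonneg (Complex.betaIntegral z (1/2)), norm_nonneg (Complex.Gamma z),
    mul_le_mul_of_nonneg_left hβbound hGz]

lemma chi_one_sub (s : ℂ) : chi (1 - s) = chi s := by
  unfold chi
  rw [completedRiemannZeta₀_one_sub]
  ring

lemma chi_eq {w : ℂ} (hw : 1 < w.re) :
    chi w = w * (w - 1) * ((Real.pi : ℂ) ^ (-w/2) * Complex.Gamma (w/2) * riemannZeta w) := by
  have hw0 : w ≠ 0 := by
    intro h; rw [h] at hw; simp at hw; linarith
  have hw1 : w ≠ 1 := by
    intro h; rw [h] at hw; simp at hw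
  have h1w : (1:ℂ) - w ≠ 0 := by
    intro h; apply hw1; linear_combination -h
  have hz := completedZeta_eq_tsum_of_one_lt_re hw
  rw [← zeta_eq_tsum_one_div_nat_cpow hw] at hz
  have h := completedRiemannZeta_eq w
  have h0 : completedRiemannZeta₀ w = completedRiemannZeta w + 1/w + 1/(1-w) := by
    rw [h]; ring
  unfold chi
  rw [h0, hz]
  field_simp
  ring

lemma norm_chi {w : ℂ} (hw : 1 < w.re) :
    ‖chi w‖ = ‖w‖ * ‖w - 1‖ * (Real.pi ^ (-(w.re)/2) * ‖Complex.Gamma (w/2)‖ * ‖riemannZeta w‖) := by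
  rw [chi_eq hw]
  rw [norm_mul, norm_mul, norm_mul, norm_mul]
  congr 2
  rw [Complex.norm_cpow_eq_rpow_re_of_pos Real.pi_pos]
  congr 1
  simp [neg_div]


lemma re_div_two (w : ℂ) : (w/2).re = w.re/2 := by
  simp [Complex.div_re, Complex.normSq]

lemma re_sub_div_two (w : ℂ) (a : ℝ) : ((w-a)/2).re = (w.re-a)/2 := by
  simp [Complex.div_re, Complex.normSq]

lemma chi_lower {w : ℂ} (hw : (20:ℝ) ≤ w.re) :
    (99/100) * (‖w‖ * ‖w - 1‖ * (Real.pi ^ (-(w.re)/2) * ‖Complex.Gamma (w/2)‖)) ≤ ‖chi w‖ := by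
  rw [norm_chi (by linarith)]
  have hz := zeta_lower (s := w) (by linarith)
  have hP : (0:ℝ) < Real.pi ^ (-(w.re)/2) := Real.rpow_pos_of_pos Real.pi_pos _
  calc (99/100) * (‖w‖ * ‖w - 1‖ * (Real.pi ^ (-(w.re)/2) * ‖Complex.Gamma (w/2)‖))
      = (‖w‖ * ‖w - 1‖ * (Real.pi ^ (-(w.re)/2) * ‖Complex.Gamma (w/2)‖)) * (99/100) := by ring
    _ ≤ (‖w‖ * ‖w - 1‖ * (Real.pi ^ (-(w.re)/2) * ‖Complex.Gamma (w/2)‖)) * ‖riemannZeta w‖ := by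
        apply mul_le_mul_of_nonneg_left hz
        positivity
    _ = _ := by ring

lemma chi_bound2 {w : ℂ} (hw : (20:ℝ) ≤ w.re) :
    ‖chi (w-2)‖ ≤ (101/100) * (‖w-3‖ * (2*Real.pi * (Real.pi ^ (-(w.re)/2) * ‖Complex.Gamma (w/2)‖))) := by
  have hre2 : (w-2).re = w.re - 2 := by simp
  rw [norm_chi (w := w-2) (by rw [hre2]; linarith)]
  rw [show w-2-1 = w-3 from by ring]
  set P := Real.pi ^ (-(w.re)/2) with hPdef
  set G := ‖Complex.Gamma (w/2)‖ with hGdef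
  have hP : (0:ℝ) < P := Real.rpow_pos_of_pos Real.pi_pos _
  have hπ : Real.pi ^ (-((w-2).re)/2) = Real.pi * P := by
    rw [hPdef, hre2, show -(w.re - 2)/2 = 1 + (-(w.re)/2) by ring, Real.rpow_add Real.pi_pos,
      Real.rpow_one]
  have h0 : w/2 - 1 ≠ 0 := by
    intro h
    have h2 : (w/2 - 1).re = 0 := by rw [h]; simp
    rw [Complex.sub_re, Complex.one_re, re_div_two] at h2
    linarith
  have hGrec : Complex.Gamma (w/2) = (w/2 - 1) * Complex.Gamma (w/2 - 1) := by
    have h := Complex.Gamma_add_one (w/2 - 1) h0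
    rw [show w/2 - 1 + 1 = w/2 by ring] at h
    exact h
  have hnw2 : ‖w/2 - 1‖ = ‖w-2‖/2 := by
    rw [show w/2 - 1 = (w - 2)/2 by ring, norm_div]
    simp
  have hw2pos : (0:ℝ) < ‖w-2‖ := by
    rw [norm_pos_iff]
    intro h
    have h3 : (w-2).re = 0 := by rw [h]; simp
    rw [hre2] at h3; linarith
  have hGw2 : ‖Complex.Gamma ((w-2)/2)‖ = 2 * G / ‖w-2‖ := by
    rw [show (w-2)/2 = w/2 - 1 by ring, hGdef, hGrec, norm_mul, hnw2, eq_div_iff hw2pos.ne']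
    ring
  have hz := zeta_upper (s := w-2) (by rw [hre2]; linarith)
  rw [hπ, hGw2]
  set a2 := ‖w-2‖ with ha2
  set a3 := ‖w-3‖ with ha3
  set zn := ‖riemannZeta (w-2)‖ with hzn
  calc a2 * a3 * (Real.pi * P * (2 * G / a2) * zn)
      = (a3 * (2*Real.pi * (P * G))) * zn := by
        field_simp [hw2pos.ne']
    _ ≤ (‖w-3‖ * (2*Real.pi * (P * G))) * (101/100) := by
        apply mul_le_mul_of_nonneg_left hz
        positivity
    _ = _ := by ring

lemma chi_bound1 {w : ℂ} (hw : (20:ℝ) ≤ w.re) :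
    ‖chi (w-1)‖ ≤ (101/100) * (‖w-1‖ * ‖w-2‖ * (2 * Real.pi ^ (-(w.re)/2))
      * (‖Complex.Gamma (w/2)‖ / Real.sqrt ((w.re-2)/2))) := by
  have hre1 : (w-1).re = w.re - 1 := by simp
  rw [norm_chi (w := w-1) (by rw [hre1]; linarith)]
  rw [show w-1-1 = w-2 from by ring]
  set P := Real.pi ^ (-(w.re)/2) with hPdef
  set G := ‖Complex.Gamma (w/2)‖ with hGdef
  have hP : (0:ℝ) < P := Real.rpow_pos_of_pos Real.pi_pos _
  have hπ : Real.pi ^ (-((w-1).re)/2) ≤ 2 * P := by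
    rw [hPdef, hre1, show -(w.re-1)/2 = (1/2 : ℝ) + (-(w.re)/2) by ring,
      Real.rpow_add Real.pi_pos]
    have h4 : (4:ℝ) ^ ((1:ℝ)/2) = 2 := by
      rw [← Real.sqrt_eq_rpow, show (4:ℝ) = 2^2 by norm_num,
        Real.sqrt_sq (by norm_num : (0:ℝ) ≤ 2)]
    have hle : Real.pi ≤ 4 := by linarith [Real.pi_lt_d2]
    have h2 : Real.pi ^ ((1:ℝ)/2) ≤ 2 := by
      calc Real.pi ^ ((1:ℝ)/2) ≤ (4:ℝ) ^ ((1:ℝ)/2) :=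
            Real.rpow_le_rpow Real.pi_pos.le hle (by norm_num)
        _ = 2 := h4
    nlinarith [Real.rpow_pos_of_pos Real.pi_pos (-(w.re)/2)]
  have hsq : (0:ℝ) < Real.sqrt ((w.re-2)/2) := Real.sqrt_pos.mpr (by linarith)
  have hΓ : ‖Complex.Gamma ((w-1)/2)‖ ≤ G / Real.sqrt ((w.re-2)/2) := by
    have hzre : ((w-1)/2).re = (w.re-1)/2 := re_sub_div_two w 1
    have h := gamma_half_bound (z := (w-1)/2) (by rw [hzre]; linarith)
    rw [show (w-1)/2 + 1/2 = w/2 from by ring, hzre,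
      show (w.re-1)/2 - 1/2 = (w.re-2)/2 from by ring] at h
    rw [le_div_iff₀ hsq]
    exact h
  have hz := zeta_upper (s := w-1) (by rw [hre1]; linarith)
  calc ‖w-1‖ * ‖w-2‖ * (Real.pi ^ (-((w-1).re)/2) * ‖Complex.Gamma ((w-1)/2)‖ * ‖riemannZeta (w-1)‖)
      ≤ ‖w-1‖ * ‖w-2‖ * ((2*P) * (G / Real.sqrt ((w.re-2)/2)) * (101/100)) := by
        gcongr
        all_goals first
          | exact hπ
          | exact hΓ
          | exact hz
          | positivity
    _ = _ := by ring

lemma coef_ineq {x r u v : ℝ} (hr : 1000000 ≤ r) (hu : u = r - 3) (hv : v = r + 3)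
    (hxu : x ≤ 315/100) (hxl : 3 < x) :
    ((51/1000)*r) * (v^2*v) * ((101/100) * (2*x))
      + 2 * v^3 * ((101/100) * (r * (2/700)))
      < (99/100) * (u^3 * r) := by
  have hrpos : (0:ℝ) < r := by linarith
  have hu0 : (0:ℝ) < u := by rw [hu]; linarith
  have hv0 : (0:ℝ) < v := by rw [hv]; linarith
  have k5 : v ≤ (100001/100000)*u := by rw [hu, hv]; linarith
  have k6 : v^3 ≤ (10001/10000)*u^3 := by
    have h := pow_le_pow_left₀ hv0.le k5 3
    have hexp : ((100001/100000)*u)^3 = ((100001/100000:ℝ))^3 * u^3 := by ring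
    have hco : (((100001:ℝ)/100000))^3 ≤ 10001/10000 := by norm_num
    have hu3 : (0:ℝ) ≤ u^3 := by positivity
    calc v^3 ≤ ((100001/100000:ℝ))^3 * u^3 := by rw [← hexp]; exact h
      _ ≤ (10001/10000)*u^3 := mul_le_mul_of_nonneg_right hco hu3
  have m1 : r*v^3 ≤ (10001/10000)*(r*u^3) := by
    have h := mul_le_mul_of_nonneg_left k6 hrpos.le
    linarith
  have m3 : (0:ℝ) < r*u^3 := mul_pos hrpos (pow_pos hu0 3)
  have hrv3 : (0:ℝ) ≤ r*v^3 := by positivity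
  have hxRV : x * (r*v^3) ≤ (315/100)*(r*v^3) :=
    mul_le_mul_of_nonneg_right hxu hrv3
  nlinarith [m1, m3, hxRV]

set_option maxHeartbeats 1000000 in
theorem f2_no_zero_left :
    ∃ σ₂ : ℝ, ∀ s : ℂ, s.re < σ₂ → f2 s ≠ 0 := by
  refine ⟨-(1000000 : ℝ), fun s hs hzero => ?_⟩
  set w : ℂ := 1 - s with hwdef
  have hσ : (1000001:ℝ) ≤ w.re := by
    rw [hwdef, Complex.sub_re, Complex.one_re]; linarith
  set r := ‖s‖ with hrdef
  have hr : (1000000:ℝ) ≤ r := by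
    have h1 : |s.re| ≤ ‖s‖ := Complex.abs_re_le_norm s
    have h2 : -s.re ≤ |s.re| := neg_le_abs _
    rw [hrdef]
    linarith
  have hwn : ‖w‖ = ‖s - 1‖ := by rw [hwdef, show (1:ℂ) - s = -(s-1) by ring, norm_neg]
  have hw1 : ‖w - 1‖ = r := by rw [hwdef, show (1:ℂ) - s - 1 = -s by ring, norm_neg, hrdef]
  have hw2 : ‖w - 2‖ = ‖s + 1‖ := by rw [hwdef, show (1:ℂ) - s - 2 = -(s+1) by ring, norm_neg]
  have hw3 : ‖w - 3‖ = ‖s + 2‖ := by rw [hwdef, show (1:ℂ) - s - 3 = -(s+2) by ring, norm_neg]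
  have hc0 : chi s = chi w := by rw [hwdef, chi_one_sub]
  have hc1 : chi (s + 1) = chi (w - 1) := by
    rw [show w - 1 = 1 - (s + 1) by rw [hwdef]; ring, chi_one_sub]
  have hc2 : chi (s + 2) = chi (w - 2) := by
    rw [show w - 2 = 1 - (s + 2) by rw [hwdef]; ring, chi_one_sub]
  have hs2 : s - 2 ≠ 0 := by
    intro h
    have h3 : (s - 2).re = 0 := by rw [h]; simp
    rw [Complex.sub_re] at h3
    have : (2:ℂ).re = 2 := by simp
    rw [this] at h3
    linarith
  have hT : (A*s+3)*(s-1)^2 * chi (w-2) - 2*(s-1)*(s-3)*chi (w-1) - (s+2)*(s-3)*chi w = 0 := by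
    have hz2 := hzero
    unfold f2 at hz2
    rcases mul_eq_zero.mp hz2 with h | h
    · exact absurd h hs2
    · rw [← hc0, ← hc1, ← hc2]; linear_combination h
  have heq : (s+2)*(s-3)*chi w = (A*s+3)*(s-1)^2*chi (w-2) - 2*(s-1)*(s-3)*chi (w-1) := by
    linear_combination (-1 : ℂ) * hT
  have hnorm : ‖s+2‖ * ‖s-3‖ * ‖chi w‖
      ≤ ‖A*s+3‖ * ‖s-1‖^2 * ‖chi (w-2)‖ + 2 * ‖s-1‖ * ‖s-3‖ * ‖chi (w-1)‖ := by
    have h2c : ‖(2:ℂ)‖ = 2 := by norm_num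
    calc ‖s+2‖ * ‖s-3‖ * ‖chi w‖ = ‖(s+2)*(s-3)*chi w‖ := by rw [norm_mul, norm_mul]
      _ = ‖(A*s+3)*(s-1)^2*chi (w-2) - 2*(s-1)*(s-3)*chi (w-1)‖ := by rw [heq]
      _ ≤ ‖(A*s+3)*(s-1)^2*chi (w-2)‖ + ‖2*(s-1)*(s-3)*chi (w-1)‖ := norm_sub_le _ _
      _ = ‖A*s+3‖ * ‖s-1‖^2 * ‖chi (w-2)‖ + 2 * ‖s-1‖ * ‖s-3‖ * ‖chi (w-1)‖ := by
          rw [norm_mul, norm_mul, norm_mul, norm_mul, norm_mul, norm_pow, h2c]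
  -- chi bounds
  have h20 : (20:ℝ) ≤ w.re := by linarith
  have hlow := chi_lower h20
  have hb1 := chi_bound1 h20
  have hb2 := chi_bound2 h20
  rw [hwn, hw1] at hlow
  rw [hw1, hw2] at hb1
  rw [hw3] at hb2
  set P := Real.pi ^ (-(w.re)/2) with hPdef
  set G := ‖Complex.Gamma (w/2)‖ with hGdef
  have hP : 0 < P := Real.rpow_pos_of_pos Real.pi_pos _
  have hG : 0 < G := by
    rw [hGdef, norm_pos_iff]
    apply Complex.Gamma_ne_zero
    intro m h
    have h4 : (w/2).re = (-(m:ℂ)).re := by rw [h]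
    rw [re_div_two] at h4
    simp at h4
    have h5 : (0:ℝ) ≤ (m:ℝ) := Nat.cast_nonneg m
    linarith
  have hsq : (700:ℝ) ≤ Real.sqrt ((w.re - 2)/2) := by
    rw [show (700:ℝ) = Real.sqrt (700^2) by
      rw [Real.sqrt_sq (by norm_num : (0:ℝ) ≤ 700)]]
    apply Real.sqrt_le_sqrt
    have h7 : ((700:ℝ))^2 = 490000 := by norm_num
    rw [h7]
    linarith
  have hGdiv : G / Real.sqrt ((w.re-2)/2) ≤ G / 700 :=
    div_le_div_of_nonneg_left hG.le (by norm_num) hsq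
  -- norm interval bounds
  set n1 := ‖s-1‖ with hn1def
  set n3 := ‖s-3‖ with hn3def
  set p1 := ‖s+1‖ with hp1def
  set p2 := ‖s+2‖ with hp2def
  have hn1l : r - 1 ≤ n1 := by
    have := norm_sub_norm_le s (1:ℂ)
    simpa [hrdef, hn1def] using this
  have hn1u : n1 ≤ r + 1 := by
    have := norm_sub_le s (1:ℂ)
    simpa [hrdef, hn1def] using this
  have hn3l : r - 3 ≤ n3 := by
    have := norm_sub_norm_le s (3:ℂ)
    have h3 : ‖(3:ℂ)‖ = 3 := by norm_num
    rw [h3] at this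
    simpa [hrdef, hn3def] using this
  have hn3u : n3 ≤ r + 3 := by
    have := norm_sub_le s (3:ℂ)
    have h3 : ‖(3:ℂ)‖ = 3 := by norm_num
    rw [h3] at this
    simpa [hrdef, hn3def] using this
  have hp1l : r - 1 ≤ p1 := by
    have := norm_sub_norm_le s (-1:ℂ)
    have h3 : ‖(-1:ℂ)‖ = 1 := by norm_num
    rw [h3, sub_neg_eq_add] at this
    simpa [hrdef, hp1def] using this
  have hp1u : p1 ≤ r + 1 := by
    have := norm_add_le s (1:ℂ)
    simpa [hrdef, hp1def] using this
  have hp2l : r - 2 ≤ p2 := by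
    have := norm_sub_norm_le s (-2:ℂ)
    have h3 : ‖(-2:ℂ)‖ = 2 := by norm_num
    rw [h3, sub_neg_eq_add] at this
    simpa [hrdef, hp2def] using this
  have hp2u : p2 ≤ r + 2 := by
    have := norm_add_le s (2:ℂ)
    have h3 : ‖(2:ℂ)‖ = 2 := by norm_num
    rw [h3] at this
    simpa [hrdef, hp2def] using this
  have hA : ‖A*s+3‖ ≤ (Real.pi/3 - 1)*r + 3 := by
    have hAval : A = ((Real.pi/3 - 1 : ℝ) : ℂ) := by
      unfold A; push_cast; ring
    have hAnorm : ‖A‖ = Real.pi/3 - 1 := by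
      rw [hAval, Complex.norm_real, Real.norm_eq_abs,
        abs_of_pos (by linarith [Real.pi_gt_three])]
    calc ‖A*s+3‖ ≤ ‖A*s‖ + ‖(3:ℂ)‖ := norm_add_le _ _
      _ = ‖A‖ * r + 3 := by rw [norm_mul, hrdef]; norm_num
      _ = (Real.pi/3 - 1)*r + 3 := by rw [hAnorm]
  -- lower bound for LHS
  have hL : (99/100)*(p2*n3*(n1*r*(P*G))) ≤ p2 * n3 * ‖chi w‖ := by
    calc (99/100)*(p2*n3*(n1*r*(P*G))) = (p2*n3) * ((99/100)*(n1 * r * (P * G))) := by ring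
      _ ≤ (p2*n3) * ‖chi w‖ := by
          apply mul_le_mul_of_nonneg_left hlow (by positivity)
      _ = p2 * n3 * ‖chi w‖ := by ring
  have hrpos : (0:ℝ) < r := by linarith
  have hπu : Real.pi ≤ 315/100 := by linarith [Real.pi_lt_d2]
  have hπl : (3:ℝ) < Real.pi := Real.pi_gt_three
  have hmid : (0:ℝ) ≤ ((Real.pi/3-1)*r+3) := by
    have h1 : (0:ℝ) ≤ (Real.pi/3-1) := by linarith
    have h2 : (0:ℝ) ≤ (Real.pi/3-1) * r := mul_nonneg h1 hrpos.le
    linarith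
  -- upper bounds for RHS
  have hR1 : ‖A*s+3‖ * n1^2 * ‖chi (w-2)‖
      ≤ ((Real.pi/3-1)*r+3) * n1^2 * ((101/100) * (p2 * (2*Real.pi * (P*G)))) := by
    have hchi2nn : (0:ℝ) ≤ ‖chi (w-2)‖ := norm_nonneg _
    apply mul_le_mul
    · apply mul_le_mul_of_nonneg_right hA (by positivity)
    · exact hb2
    · exact hchi2nn
    · exact mul_nonneg hmid (by positivity)
  have hR2 : 2 * n1 * n3 * ‖chi (w-1)‖
      ≤ 2 * n1 * n3 * ((101/100) * (r * p1 * (2 * P) * (G/700))) := by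
    apply mul_le_mul_of_nonneg_left _ (by positivity)
    calc ‖chi (w-1)‖ ≤ (101/100) * (r * p1 * (2 * P) * (G / Real.sqrt ((w.re-2)/2))) := hb1
      _ ≤ (101/100) * (r * p1 * (2 * P) * (G/700)) := by
          apply mul_le_mul_of_nonneg_left _ (by norm_num)
          apply mul_le_mul_of_nonneg_left hGdiv (by positivity)
  -- the key numeric inequality
  set u := r - 3 with hudef
  set v := r + 3 with hvdef
  have hu0 : (0:ℝ) < u := by rw [hudef]; linarith
  have hv0 : (0:ℝ) < v := by rw [hvdef]; linarith
  have hn1v : n1 ≤ v := by rw [hvdef]; linarith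
  have hn3v : n3 ≤ v := by rw [hvdef]; linarith
  have hp1v : p1 ≤ v := by rw [hvdef]; linarith
  have hp2v : p2 ≤ v := by rw [hvdef]; linarith
  have hn1u' : u ≤ n1 := by rw [hudef]; linarith
  have hn3u' : u ≤ n3 := by rw [hudef]; linarith
  have hp2u' : u ≤ p2 := by rw [hudef]; linarith
  have k1 : (Real.pi/3-1)*r + 3 ≤ (51/1000)*r := by
    have h1 : (Real.pi/3 - 1) * r ≤ (50/1000)*r :=
      mul_le_mul_of_nonneg_right (by linarith) hrpos.le
    linarith
  have k2 : n1^2*p2 ≤ v^2*v := by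
    apply mul_le_mul _ hp2v (by positivity) (by positivity)
    apply pow_le_pow_left₀ (by positivity) hn1v
  have k3 : n1*n3*p1 ≤ v^3 := by
    have : n1*n3*p1 ≤ v*v*v := by
      apply mul_le_mul _ hp1v (by positivity) (by positivity)
      apply mul_le_mul hn1v hn3v (by positivity) hv0.le
    calc n1*n3*p1 ≤ v*v*v := this
      _ = v^3 := by ring
  have k4 : u^3 ≤ p2*n3*n1 := by
    have : u*u*u ≤ p2*n3*n1 := by
      apply mul_le_mul _ hn1u' hu0.le (by positivity)
      apply mul_le_mul hp2u' hn3u' hu0.le (by positivity)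
    calc u^3 = u*u*u := by ring
      _ ≤ p2*n3*n1 := this
  have k5 : v ≤ (100001/100000)*u := by
    rw [hudef, hvdef]; linarith
  have k6 : v^3 ≤ (10001/10000)*u^3 := by
    have h := pow_le_pow_left₀ hv0.le k5 3
    have hexp : ((100001/100000)*u)^3 = ((100001/100000:ℝ))^3 * u^3 := by ring
    have hco : (((100001:ℝ)/100000))^3 ≤ 10001/10000 := by norm_num
    have hu3 : (0:ℝ) ≤ u^3 := by positivity
    calc v^3 ≤ ((100001/100000:ℝ))^3 * u^3 := by rw [← hexp]; exact h
      _ ≤ (10001/10000)*u^3 := mul_le_mul_of_nonneg_right hco hu3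
  -- coefficient inequality
  have hcoef : ((51/1000)*r) * (v^2*v) * ((101/100) * (2*Real.pi))
      + 2 * v^3 * ((101/100) * (r * (2/700)))
      < (99/100) * (u^3 * r) :=
    coef_ineq hr hudef hvdef hπu hπl
  -- combine everything
  have hQ : (0:ℝ) < P*G := mul_pos hP hG
  have hRfinal : ((Real.pi/3-1)*r+3) * n1^2 * ((101/100) * (p2 * (2*Real.pi * (P*G))))
      + 2 * n1 * n3 * ((101/100) * (r * p1 * (2 * P) * (G/700)))
      < (99/100)*(p2*n3*(n1*r*(P*G))) := by
    have base1 : ((Real.pi/3-1)*r+3) * (n1^2*p2) ≤ ((51/1000)*r) * (v^2*v) :=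
      mul_le_mul k1 k2 (by positivity) (by positivity)
    have e1 : ((Real.pi/3-1)*r+3) * n1^2 * ((101/100) * (p2 * (2*Real.pi * (P*G))))
        ≤ ((51/1000)*r) * (v^2*v) * ((101/100) * (2*Real.pi)) * (P*G) := by
      calc ((Real.pi/3-1)*r+3) * n1^2 * ((101/100) * (p2 * (2*Real.pi * (P*G))))
          = (((Real.pi/3-1)*r+3) * (n1^2*p2)) * ((101/100) * (2*Real.pi) * (P*G)) := by ring
        _ ≤ (((51/1000)*r) * (v^2*v)) * ((101/100) * (2*Real.pi) * (P*G)) := by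
            apply mul_le_mul_of_nonneg_right base1
            positivity
        _ = ((51/1000)*r) * (v^2*v) * ((101/100) * (2*Real.pi)) * (P*G) := by ring
    have e2 : 2 * n1 * n3 * ((101/100) * (r * p1 * (2 * P) * (G/700)))
        ≤ 2 * v^3 * ((101/100) * (r * (2/700))) * (P*G) := by
      calc 2 * n1 * n3 * ((101/100) * (r * p1 * (2 * P) * (G/700)))
          ≤ 2 * n1 * n3 * ((101/100) * (r * v * (2 * P) * (G/700))) := by
            apply mul_le_mul_of_nonneg_left _ (by positivity)
            apply mul_le_mul_of_nonneg_left _ (by norm_num)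
            apply mul_le_mul_of_nonneg_right _ (by positivity)
            apply mul_le_mul_of_nonneg_right _ (by positivity)
            exact mul_le_mul_of_nonneg_left hp1v hrpos.le
          _ = (n1 * n3) * ((2:ℝ) * (101/100) * (r * v * (2 * P) * (G/700))) := by ring
          _ ≤ (v * v) * ((2:ℝ) * (101/100) * (r * v * (2 * P) * (G/700))) := by
            apply mul_le_mul_of_nonneg_right _ (by positivity)
            exact mul_le_mul hn1v hn3v (by positivity) hv0.le
          _ = 2 * v^3 * ((101/100) * (r * (2/700))) * (P*G) := by ring
    have e3 : (99/100) * (u^3 * r) * (P*G) ≤ (99/100)*(p2*n3*(n1*r*(P*G))) := by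
      calc (99/100) * (u^3 * r) * (P*G) = u^3 * ((99/100)*r*(P*G)) := by ring
        _ ≤ (p2*n3*n1) * ((99/100)*r*(P*G)) := by
            apply mul_le_mul_of_nonneg_right k4
            positivity
        _ = (99/100)*(p2*n3*(n1*r*(P*G))) := by ring
    calc ((Real.pi/3-1)*r+3) * n1^2 * ((101/100) * (p2 * (2*Real.pi * (P*G))))
        + 2 * n1 * n3 * ((101/100) * (r * p1 * (2 * P) * (G/700)))
        ≤ ((51/1000)*r) * (v^2*v) * ((101/100) * (2*Real.pi)) * (P*G)
          + 2 * v^3 * ((101/100) * (r * (2/700))) * (P*G) := add_le_add e1 e2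
      _ = (((51/1000)*r) * (v^2*v) * ((101/100) * (2*Real.pi))
          + 2 * v^3 * ((101/100) * (r * (2/700)))) * (P*G) := by ring
      _ < ((99/100) * (u^3 * r)) * (P*G) := mul_lt_mul_of_pos_right hcoef hQ
      _ = (99/100) * (u^3 * r) * (P*G) := by ring
      _ ≤ (99/100)*(p2*n3*(n1*r*(P*G))) := e3
  linarith [hnorm, hL, hR1, hR2, hRfinal]
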